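/- arXiv:1011.2588 — 2 statements merged into one kernel-verified Lean document; each statement's English description precedes it below -/
import Mathlib

section
/- If ω is a primitive n-th root of unity and k, s are naturals with 1 ≤ k ≤ n-1 and n ≤ k+s ≤ k+n-1, then the Gaussian binomial coefficient (k+s choose k)_ω evaluated at ω equals 0. -/
open Finset

/-- The Gaussian binomial coefficient as a polynomial in `q`, via the `q`-Pascal rule
`(n+1 choose k+1)_q = (n choose k)_q + q^(k+1) (n choose k+1)_q`. -/
noncomputable def gaussPoly : ℕ → ℕ → Polynomial ℤ
  | 0, 0 => 1
  | 0, _ + 1 => 0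
  | _ + 1, 0 => 1
  | n + 1, k + 1 => gaussPoly n k + Polynomial.X ^ (k + 1) * gaussPoly n (k + 1)

lemma gaussPoly_eq_zero : ∀ m k, m < k → gaussPoly m k = 0
  | 0, _ + 1, _ => rfl
  | m + 1, k + 1, h => by
    show gaussPoly m k + Polynomial.X ^ (k + 1) * gaussPoly m (k + 1) = 0
    rw [gaussPoly_eq_zero m k (by omega), gaussPoly_eq_zero m (k + 1) (by omega)]
    ring

lemma gaussPoly_key : ∀ m k, k ≤ m →
    gaussPoly m k * ∏ i ∈ range k, (Polynomial.X ^ (i + 1) - 1) =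
      ∏ i ∈ range k, (Polynomial.X ^ (m - i) - 1 : Polynomial ℤ)
  | m, 0, _ => by cases m <;> simp [gaussPoly]
  | 0, k + 1, h => absurd h (by omega)
  | m + 1, k + 1, h => by
    have IH1 := gaussPoly_key m k (by omega)
    have hdef : gaussPoly (m + 1) (k + 1) =
        gaussPoly m k + Polynomial.X ^ (k + 1) * gaussPoly m (k + 1) := rfl
    have hre : ∏ i ∈ range (k + 1), (Polynomial.X ^ (m + 1 - i) - 1 : Polynomial ℤ) =
        (∏ i ∈ range k, (Polynomial.X ^ (m - i) - 1 : Polynomial ℤ)) *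
          (Polynomial.X ^ (m + 1) - 1) := by
      rw [prod_range_succ']
      simp
    rw [hdef, hre, prod_range_succ]
    by_cases hk : k + 1 ≤ m
    · have IH2 := gaussPoly_key m (k + 1) hk
      rw [prod_range_succ, prod_range_succ] at IH2
      have hx : (Polynomial.X : Polynomial ℤ) ^ (k + 1) * Polynomial.X ^ (m - k) =
          Polynomial.X ^ (m + 1) := by
        rw [← pow_add]; congr 1; omega
      linear_combination (Polynomial.X ^ (k + 1) - 1 : Polynomial ℤ) * IH1 +
        (Polynomial.X : Polynomial ℤ) ^ (k + 1) * IH2 +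
        (∏ i ∈ range k, (Polynomial.X ^ (m - i) - 1 : Polynomial ℤ)) * hx
    · have hkm : k = m := by omega
      subst hkm
      rw [gaussPoly_eq_zero k (k + 1) (by omega)]
      linear_combination (Polynomial.X ^ (k + 1) - 1 : Polynomial ℤ) * IH1

theorem qbinom_eq_zero_of_root {K : Type*} [Field K] [CharZero K] {n : ℕ} (hn : 1 < n)
    {ω : K} (hω : IsPrimitiveRoot ω n) (k s : ℕ) (hk1 : 1 ≤ k) (hk2 : k ≤ n - 1)
    (hks1 : n ≤ k + s) (hks2 : k + s ≤ k + n - 1) :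
    Polynomial.aeval ω (gaussPoly (k + s) k) = 0 := by
  have H := congrArg (Polynomial.aeval ω) (gaussPoly_key (k + s) k (by omega))
  simp only [map_mul, map_prod, map_sub, map_pow, map_one, Polynomial.aeval_X] at H
  have hR : ∏ i ∈ range k, (ω ^ (k + s - i) - 1) = 0 := by
    apply prod_eq_zero (i := k + s - n)
    · exact mem_range.mpr (by omega)
    · have : k + s - (k + s - n) = n := by omega
      rw [this, hω.pow_eq_one, sub_self]
  rw [hR] at H
  have hL : ∏ i ∈ range k, (ω ^ (i + 1) - 1) ≠ 0 := by
    rw [prod_ne_zero_iff]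
    intro i hi
    refine sub_ne_zero.mpr ?_
    exact hω.pow_ne_one_of_pos_of_lt (by omega) (by have := mem_range.mp hi; omega)
  exact (mul_eq_zero.mp H).resolve_right hL
end

section
/- Let ω be a primitive n-th root of unity. Then the number-theoretic identity holds: for 0 ≤ k, s ≤ n-1, ∑_{compositions i_1+...+i_{s+1}=k} ω^{i_2 + 2i_3 + ... + s·i_{s+1}} equals (k+s choose k)_ω if k+s < n, and 0 if k+s ≥ n. -/
open Finset

lemma gaussPoly_zero_right (n : ℕ) : gaussPoly n 0 = 1 := by cases n <;> rfl

lemma gaussPoly_eq_zero_s15 {n k : ℕ} (h : n < k) : gaussPoly n k = 0 := by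
  induction n generalizing k with
  | zero => obtain ⟨m, rfl⟩ := Nat.exists_eq_add_of_lt h; rfl
  | succ n ih =>
    obtain ⟨m, rfl⟩ := Nat.exists_eq_add_of_lt h
    rw [show n + 1 + m + 1 = (n + m + 1) + 1 from by omega]
    show gaussPoly n (n + m + 1) + Polynomial.X ^ (n + m + 2) * gaussPoly n (n + m + 2) = 0
    rw [ih (by omega), ih (by omega), mul_zero, add_zero]

lemma gaussPoly_self (n : ℕ) : gaussPoly n n = 1 := by
  induction n with
  | zero => rfl
  | succ n ih =>
    show gaussPoly n n + _ * gaussPoly n (n + 1) = 1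
    rw [ih, gaussPoly_eq_zero_s15 (by omega), mul_zero, add_zero]

noncomputable def qInt (j : ℕ) : Polynomial ℤ := ∑ t ∈ range j, Polynomial.X ^ t

noncomputable def qFact (m : ℕ) : Polynomial ℤ := ∏ i ∈ range m, qInt (i + 1)

lemma gaussPoly_succ_succ (n k : ℕ) :
    gaussPoly (n + 1) (k + 1) = gaussPoly n k + Polynomial.X ^ (k + 1) * gaussPoly n (k + 1) := rfl

lemma qFact_succ (m : ℕ) : qFact (m + 1) = qFact m * qInt (m + 1) := by
  rw [qFact, prod_range_succ]; rfl

lemma qInt_add (a b : ℕ) : qInt a + Polynomial.X ^ a * qInt b = qInt (a + b) := by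
  rw [qInt, qInt, qInt, Finset.sum_range_add, Finset.mul_sum]
  congr 1
  exact Finset.sum_congr rfl fun t _ => (pow_add _ _ _).symm

lemma gaussPoly_mul_qFact : ∀ n k, k ≤ n →
    gaussPoly n k * qFact k * qFact (n - k) = qFact n := by
  intro n
  induction n with
  | zero => intro k hk; interval_cases k; simp [gaussPoly_zero_right, qFact]
  | succ n ih =>
    intro k hk
    match k with
    | 0 => simp [gaussPoly_zero_right, qFact]
    | k + 1 =>
      rcases Nat.lt_or_ge k n with h | h
      · have h1 := ih k (by omega)
        have h2 := ih (k + 1) (by omega)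
        have e1 : n + 1 - (k + 1) = (n - (k + 1)) + 1 := by omega
        have e2 : n - k = (n - (k + 1)) + 1 := by omega
        have key : qInt (k + 1) + Polynomial.X ^ (k + 1) * qInt (n - (k + 1) + 1) =
            qInt (n + 1) := by
          rw [qInt_add]; congr 1; omega
        rw [gaussPoly_succ_succ, add_mul, add_mul, e1, qFact_succ (n - (k + 1))]
        calc gaussPoly n k * qFact (k + 1) * (qFact (n - (k + 1)) * qInt (n - (k + 1) + 1))
              + Polynomial.X ^ (k + 1) * gaussPoly n (k + 1) * qFact (k + 1) *
                (qFact (n - (k + 1)) * qInt (n - (k + 1) + 1))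
            = (gaussPoly n k * qFact k * qFact (n - k)) * qInt (k + 1)
              + Polynomial.X ^ (k + 1) *
                ((gaussPoly n (k + 1) * qFact (k + 1) * qFact (n - (k + 1))) *
                  qInt (n - (k + 1) + 1)) := by
              rw [qFact_succ k, e2, qFact_succ (n - (k + 1))]; ring
          _ = qFact n * (qInt (k + 1) + Polynomial.X ^ (k + 1) * qInt (n - (k + 1) + 1)) := by
              rw [h1, h2]; ring
          _ = qFact (n + 1) := by rw [key, qFact_succ]
      · have hkn : k = n := by omega
        subst hkn
        rw [gaussPoly_succ_succ, gaussPoly_self, gaussPoly_eq_zero_s15 (by omega), mul_zero, add_zero,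
          Nat.sub_self]
        simp [qFact, gaussPoly_self]

lemma sum_antidiagonalTuple_succ {M : Type*} [AddCommMonoid M] (k n : ℕ)
    (f : (Fin (k + 1) → ℕ) → M) :
    ∑ x ∈ Finset.Nat.antidiagonalTuple (k + 1) n, f x =
      ∑ p ∈ Finset.HasAntidiagonal.antidiagonal n, ∑ x ∈ Finset.Nat.antidiagonalTuple k p.2,
        f (Fin.cons p.1 x) := by
  rw [Finset.sum_sigma']
  refine Finset.sum_nbij' (fun y => ⟨(y 0, ∑ i : Fin k, y i.succ), Fin.tail y⟩)
    (fun q => Fin.cons q.1.1 q.2) ?_ ?_ ?_ ?_ ?_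
  · intro y hy
    rw [Finset.Nat.mem_antidiagonalTuple] at hy
    rw [Finset.mem_sigma, Finset.HasAntidiagonal.mem_antidiagonal, Finset.Nat.mem_antidiagonalTuple]
    constructor
    · rw [← hy, Fin.sum_univ_succ]
    · rfl
  · intro q hq
    rw [Finset.mem_sigma, Finset.HasAntidiagonal.mem_antidiagonal, Finset.Nat.mem_antidiagonalTuple] at hq
    rw [Finset.Nat.mem_antidiagonalTuple, Fin.sum_cons, hq.2, hq.1]
  · intro y _
    exact Fin.cons_self_tail y
  · intro q hq
    rw [Finset.mem_sigma, Finset.HasAntidiagonal.mem_antidiagonal, Finset.Nat.mem_antidiagonalTuple] at hq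
    refine Sigma.ext ?_ (heq_of_eq ?_)
    · simp only [Fin.cons_zero, Fin.cons_succ]
      exact Prod.ext rfl hq.2
    · funext i; simp [Fin.tail]
  · intro y _
    rw [Fin.cons_self_tail]

lemma gaussPoly_sum (s : ℕ) : ∀ k, gaussPoly (k + s + 1) k =
    ∑ b ∈ range (k + 1), Polynomial.X ^ b * gaussPoly (b + s) b := by
  intro k
  induction k with
  | zero => simp [gaussPoly_zero_right]
  | succ k ih =>
    rw [show k + 1 + s + 1 = (k + s + 1) + 1 from by omega, gaussPoly_succ_succ, ih,
      Finset.sum_range_succ _ (k + 1), show k + 1 + s = k + s + 1 from by omega]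

lemma tuple_sum_eq (s : ℕ) : ∀ k, (∑ x ∈ Finset.Nat.antidiagonalTuple (s + 1) k,
    (Polynomial.X : Polynomial ℤ) ^ (∑ j : Fin (s + 1), x j * (j : ℕ))) = gaussPoly (k + s) k := by
  induction s with
  | zero =>
    intro k
    rw [Finset.Nat.antidiagonalTuple_one]
    simp [gaussPoly_self]
  | succ s ih =>
    intro k
    rw [sum_antidiagonalTuple_succ]
    have step : ∀ p ∈ Finset.HasAntidiagonal.antidiagonal k,
        (∑ x ∈ Finset.Nat.antidiagonalTuple (s + 1) p.2,
          (Polynomial.X : Polynomial ℤ) ^ (∑ j : Fin (s + 2), (Fin.cons p.1 x : Fin (s+2) → ℕ) j * (j : ℕ))) =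
        Polynomial.X ^ p.2 * gaussPoly (p.2 + s) p.2 := by
      intro p hp
      rw [← ih p.2, Finset.mul_sum]
      apply Finset.sum_congr rfl
      intro x hx
      rw [← pow_add]
      congr 1
      rw [Finset.Nat.mem_antidiagonalTuple] at hx
      rw [Fin.sum_univ_succ]
      simp only [Fin.cons_zero, Fin.cons_succ, Fin.val_zero, Nat.mul_zero, Nat.zero_add]
      rw [← hx, ← Finset.sum_add_distrib]
      apply Finset.sum_congr rfl
      intro i _
      simp only [Fin.val_succ]
      ring
    rw [Finset.sum_congr rfl step, Finset.Nat.sum_antidiagonal_eq_sum_range_succ_mk,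
      show k + (s + 1) = k + s + 1 from rfl, gaussPoly_sum]
    have := Finset.sum_range_reflect
      (fun b => (Polynomial.X : Polynomial ℤ) ^ b * gaussPoly (b + s) b) (k + 1)
    simpa using this

theorem main_identity {K : Type*} [Field K] [CharZero K] {n : ℕ} (hn : 1 < n) {ω : K}
    (hω : IsPrimitiveRoot ω n) (k s : ℕ) (hk : k ≤ n - 1) (hs : s ≤ n - 1) :
    ∑ i ∈ Finset.Nat.antidiagonalTuple (s + 1) k, ω ^ (∑ j : Fin (s + 1), i j * (j : ℕ)) =
      if k + s < n then Polynomial.aeval ω (gaussPoly (k + s) k) else 0 := by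
  have h1 : ∑ i ∈ Finset.Nat.antidiagonalTuple (s + 1) k, ω ^ (∑ j : Fin (s + 1), i j * (j : ℕ))
      = Polynomial.aeval ω (gaussPoly (k + s) k) := by
    rw [← tuple_sum_eq s k, map_sum]
    simp
  by_cases hlt : k + s < n
  · rw [if_pos hlt, h1]
  · rw [if_neg hlt, h1]
    have hfac := congrArg (Polynomial.aeval ω) (gaussPoly_mul_qFact (k + s) k (by omega))
    rw [map_mul, map_mul, show k + s - k = s from by omega] at hfac
    have hzero : Polynomial.aeval ω (qFact (k + s)) = 0 := by
      rw [qFact, map_prod]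
      apply Finset.prod_eq_zero (i := n - 1) (Finset.mem_range.mpr (by omega))
      rw [qInt, map_sum]
      simp only [map_pow, Polynomial.aeval_X]
      rw [show n - 1 + 1 = n from by omega]
      exact hω.geom_sum_eq_zero hn
    have hne : ∀ m, m ≤ n - 1 → Polynomial.aeval ω (qFact m) ≠ 0 := by
      intro m hm
      rw [qFact, map_prod]
      apply Finset.prod_ne_zero_iff.mpr
      intro i hi
      rw [Finset.mem_range] at hi
      rw [qInt, map_sum]
      simp only [map_pow, Polynomial.aeval_X]
      have hω1 : ω ≠ 1 := hω.ne_one hn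
      rw [geom_sum_eq hω1]
      apply div_ne_zero
      · intro h
        have hlt2 : i + 1 < n := by omega
        exact hω.pow_ne_one_of_pos_of_lt (Nat.succ_ne_zero i) hlt2 (sub_eq_zero.mp h)
      · intro h
        exact hω1 (sub_eq_zero.mp h)
    rw [hzero] at hfac
    have h2 := hne k hk
    have h3 := hne s hs
    rcases mul_eq_zero.mp hfac with h | h
    · rcases mul_eq_zero.mp h with h' | h'
      · exact h'
      · exact absurd h' h2
    · exact absurd h h3
end
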